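/- Convergence of the deterministic PSO recurrence: let w, φ ∈ ℝ satisfy 0 < w < 1 and 0 < φ < 2·(1 + w), let p ∈ ℝ, and let (x(t)) be any real sequence satisfying the second-order recurrence x(t+2) = (1 + w − φ)·x(t+1) − w·x(t) + φ·p for all t. Then x(t) converges to p as t → ∞. -/

import Mathlib

open Filter

/-- Existence of characteristic roots inside the unit disk. -/
lemma pso_exists_roots (w a : ℝ) (hw0 : 0 < w) (hw1 : w < 1) (ha : |a| < 1 + w) :
    ∃ l1 l2 : ℂ, l1 + l2 = (a : ℂ) ∧ l1 * l2 = (w : ℂ) ∧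
      ‖l1‖ < 1 ∧ ‖l2‖ < 1 := by
  have ha' := abs_lt.1 ha
  rcases le_or_gt (4 * w) (a ^ 2) with h | h
  · set d := Real.sqrt (a ^ 2 - 4 * w) with hd
    have hd0 : 0 ≤ d := Real.sqrt_nonneg _
    have hd2 : d ^ 2 = a ^ 2 - 4 * w := Real.sq_sqrt (by linarith)
    have hdlt : d < 2 - |a| := by
      nlinarith [abs_nonneg a, sq_abs a]
    have h1 : |(a + d) / 2| < 1 := by
      rw [abs_lt]
      constructor <;> nlinarith [le_abs_self a, neg_abs_le a]
    have h2 : |(a - d) / 2| < 1 := by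
      rw [abs_lt]
      constructor <;> nlinarith [le_abs_self a, neg_abs_le a]
    refine ⟨(((a + d) / 2 : ℝ) : ℂ), (((a - d) / 2 : ℝ) : ℂ), by push_cast; ring, ?_, ?_, ?_⟩
    · rw [← Complex.ofReal_mul]
      have : (a + d) / 2 * ((a - d) / 2) = w := by nlinarith
      rw [this]
    · rwa [Complex.norm_real, Real.norm_eq_abs]
    · rwa [Complex.norm_real, Real.norm_eq_abs]
  · set d := Real.sqrt (4 * w - a ^ 2) with hd
    have hd0 : 0 ≤ d := Real.sqrt_nonneg _
    have hd2 : d ^ 2 = 4 * w - a ^ 2 := Real.sq_sqrt (by linarith)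
    refine ⟨((a / 2 : ℝ) : ℂ) + ((d / 2 : ℝ) : ℂ) * Complex.I,
            ((a / 2 : ℝ) : ℂ) + ((-(d / 2) : ℝ) : ℂ) * Complex.I, by push_cast; ring, ?_, ?_, ?_⟩
    · have hI := Complex.I_sq
      push_cast
      have : ((a : ℂ) / 2 + (d : ℂ) / 2 * Complex.I) * ((a : ℂ) / 2 + -((d : ℂ) / 2) * Complex.I)
          = (a : ℂ) ^ 2 / 4 - (d : ℂ) ^ 2 / 4 * Complex.I ^ 2 := by ring
      rw [this, hI]
      have : ((d : ℂ)) ^ 2 = ((d ^ 2 : ℝ) : ℂ) := by push_cast; ring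
      rw [this, hd2]
      push_cast
      ring
    · have hsq : ‖((a / 2 : ℝ) : ℂ) + ((d / 2 : ℝ) : ℂ) * Complex.I‖ ^ 2
          = (a / 2) ^ 2 + (d / 2) ^ 2 := by
        rw [Complex.sq_norm, Complex.normSq_add_mul_I]
      nlinarith [norm_nonneg (((a / 2 : ℝ) : ℂ) + ((d / 2 : ℝ) : ℂ) * Complex.I)]
    · have hsq : ‖((a / 2 : ℝ) : ℂ) + ((-(d / 2) : ℝ) : ℂ) * Complex.I‖ ^ 2
          = (a / 2) ^ 2 + (-(d / 2)) ^ 2 := by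
        rw [Complex.sq_norm, Complex.normSq_add_mul_I]
      nlinarith [norm_nonneg (((a / 2 : ℝ) : ℂ) + ((-(d / 2) : ℝ) : ℂ) * Complex.I)]

/-- Convergence of the deterministic PSO recurrence to the
attractor. -/
theorem pso_recurrence_tendsto
    (w φ p : ℝ) (hw0 : 0 < w) (hw1 : w < 1)
    (hφ0 : 0 < φ) (hφ2 : φ < 2 * (1 + w))
    (x : ℕ → ℝ)
    (hrec : ∀ t : ℕ,
      x (t + 2) = (1 + w - φ) * x (t + 1) - w * x t + φ * p) :
    Tendsto x atTop (nhds p) := by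
  set a : ℝ := 1 + w - φ with hadef
  have ha : |a| < 1 + w := by
    rw [abs_lt]; constructor <;> [linarith; linarith]
  obtain ⟨l1, l2, hsum, hprod, h1, h2⟩ := pso_exists_roots w a hw0 hw1 ha
  set y : ℕ → ℂ := fun t => ((x t : ℂ) - (p : ℂ)) with hydef
  have hy : ∀ t, y (t + 2) = (a : ℂ) * y (t + 1) - (w : ℂ) * y t := by
    intro t
    simp only [hydef]
    have := hrec t
    push_cast [this, hadef]
    ring
  set z : ℕ → ℂ := fun t => y (t + 1) - l2 * y t with hzdef
  have hz : ∀ t, z (t + 1) = l1 * z t := by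
    intro t
    simp only [hzdef]
    rw [hy t, ← hsum, ← hprod]
    ring
  have hzt : ∀ t, z t = l1 ^ t * z 0 := by
    intro t
    induction t with
    | zero => simp
    | succ n ih => rw [hz n, ih, pow_succ]; ring
  set r : ℝ := max (‖l1‖) (‖l2‖) with hrdef
  have hr1 : r < 1 := max_lt h1 h2
  have hr0 : 0 < r := by
    have : l1 ≠ 0 := by
      intro hl
      rw [hl, zero_mul] at hprod
      exact (ne_of_gt hw0) (by exact_mod_cast hprod.symm)
    have : 0 < ‖l1‖ := norm_pos_iff.mpr this
    exact lt_of_lt_of_le this (le_max_left _ _)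
  set C : ℝ := ‖y 0‖ + ‖z 0‖ / r with hCdef
  have hC0 : 0 ≤ C := by
    have := norm_nonneg (y 0)
    have := norm_nonneg (z 0)
    positivity
  have hzC : ‖z 0‖ ≤ C * r := by
    have h1' := norm_nonneg (y 0)
    rw [hCdef, add_mul, div_mul_cancel₀ _ (ne_of_gt hr0)]
    nlinarith [norm_nonneg (z 0)]
  have key : ∀ t, ‖y t‖ ≤ C * (t + 1) * r ^ t := by
    intro t
    induction t with
    | zero =>
      simp only [pow_zero, Nat.cast_zero]
      have : ‖z 0‖ / r ≥ 0 := by positivity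
      rw [hCdef]; linarith
    | succ n ih =>
      have hyn : y (n + 1) = l2 * y n + z n := by simp [hzdef]
      have hb : ‖y (n + 1)‖ ≤
          ‖l2‖ * ‖y n‖ + ‖l1‖ ^ n * ‖z 0‖ := by
        rw [hyn]
        calc ‖l2 * y n + z n‖
            ≤ ‖l2 * y n‖ + ‖z n‖ := norm_add_le _ _
          _ = ‖l2‖ * ‖y n‖ + ‖l1‖ ^ n * ‖z 0‖ := by
              rw [norm_mul, hzt n, norm_mul, norm_pow]
      have hl2r : ‖l2‖ ≤ r := le_max_right _ _
      have hl1r : ‖l1‖ ≤ r := le_max_left _ _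
      have hl1n : ‖l1‖ ^ n ≤ r ^ n :=
        pow_le_pow_left₀ (norm_nonneg _) hl1r n
      have hrn : 0 ≤ r ^ n := by positivity
      have hyn0 : 0 ≤ ‖y n‖ := norm_nonneg _
      have hz0 : 0 ≤ ‖z 0‖ := norm_nonneg _
      calc ‖y (n + 1)‖
          ≤ ‖l2‖ * ‖y n‖ + ‖l1‖ ^ n * ‖z 0‖ := hb
        _ ≤ r * (C * (n + 1) * r ^ n) + r ^ n * (C * r) := by
            have h3 : ‖l2‖ * ‖y n‖ ≤ r * (C * (n + 1) * r ^ n) := by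
              have := mul_le_mul hl2r ih hyn0 (le_of_lt hr0)
              calc ‖l2‖ * ‖y n‖ ≤ r * (C * (↑n + 1) * r ^ n) := this
                _ = r * (C * (n + 1) * r ^ n) := by ring
            have h4 : ‖l1‖ ^ n * ‖z 0‖ ≤ r ^ n * (C * r) := by
              apply mul_le_mul hl1n (by linarith [hzC]) hz0 hrn
            linarith
        _ = C * (↑(n + 1) + 1) * r ^ (n + 1) := by push_cast; ring
  -- conclude
  have hbnd : ∀ t, |x t - p| ≤ C * (t + 1) * r ^ t := by
    intro t
    have : ‖y t‖ = |x t - p| := by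
      simp only [hydef]
      rw [← Complex.ofReal_sub, Complex.norm_real, Real.norm_eq_abs]
    rw [← this]; exact key t
  have hlim : Tendsto (fun t : ℕ => C * (t + 1) * r ^ t) atTop (nhds 0) := by
    have h1 : Tendsto (fun t : ℕ => (t : ℝ) * r ^ t) atTop (nhds 0) :=
      tendsto_self_mul_const_pow_of_lt_one (le_of_lt hr0) hr1
    have h2 : Tendsto (fun t : ℕ => r ^ t) atTop (nhds 0) :=
      tendsto_pow_atTop_nhds_zero_of_lt_one (le_of_lt hr0) hr1
    have := (h1.add h2).const_mul C
    simpa [mul_add, mul_comm, mul_assoc, mul_left_comm, add_mul] using this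
  have : Tendsto (fun t => x t - p) atTop (nhds 0) := by
    apply squeeze_zero_norm (fun t => ?_) hlim
    simpa [Real.norm_eq_abs] using hbnd t
  have := this.add_const p
  simpa using this
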